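/- Let n ≥ 2, let u, u' ∈ ℝⁿ be unit timelike vectors, and let C : (Fin n)⁴ → ℝ be any rank-4 covariant tensor (no symmetries assumed). If θ_u·C = C and θ_{u'}·C = −C, then C = 0. In other words, a nonzero rank-4 tensor cannot be purely electric with respect to one unit timelike direction and purely magnetic with respect to another, possibly different, unit timelike direction. -/

import Mathlib

open Matrix

noncomputable section

/-- The Minkowski metric `η = diag(-1, 1, …, 1)` on `ℝⁿ`. -/
def eta (n : ℕ) : Matrix (Fin n) (Fin n) ℝ :=
  Matrix.diagonal fun i => if i.val = 0 then (-1 : ℝ) else 1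

/-- The reflection `θ_u = I + 2u(ηu)ᵀ` sending `u ↦ -u` and fixing `u^⊥`. -/
def theta {n : ℕ} (u : Fin n → ℝ) : Matrix (Fin n) (Fin n) ℝ :=
  1 + (2 : ℝ) • vecMulVec u ((eta n).mulVec u)

/-- The pullback action of a matrix `Λ` on rank-4 covariant tensors. -/
def pull {n : ℕ} (Λ : Matrix (Fin n) (Fin n) ℝ)
    (C : Fin n → Fin n → Fin n → Fin n → ℝ) : Fin n → Fin n → Fin n → Fin n → ℝ :=
  fun a b c d => ∑ a', ∑ b', ∑ c', ∑ d',
    C a' b' c' d' * Λ a' a * Λ b' b * Λ c' c * Λ d' d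

/-! ### Auxiliary machinery -/

lemma sum4_prod {α : Type*} [Fintype α] (g1 g2 g3 g4 : α → ℝ) :
    (∑ z1, ∑ z2, ∑ z3, ∑ z4, g1 z1 * g2 z2 * g3 z3 * g4 z4)
      = (∑ i, g1 i) * (∑ i, g2 i) * (∑ i, g3 i) * (∑ i, g4 i) := by
  simp only [← Finset.sum_mul, ← Finset.mul_sum]

/-- Fourth Kronecker power of a matrix. -/
def KP {n : ℕ} (Λ : Matrix (Fin n) (Fin n) ℝ) :
    Matrix (Fin n × Fin n × Fin n × Fin n) (Fin n × Fin n × Fin n × Fin n) ℝ :=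
  fun x y => Λ x.1 y.1 * Λ x.2.1 y.2.1 * Λ x.2.2.1 y.2.2.1 * Λ x.2.2.2 y.2.2.2

/-- A rank-4 tensor, flattened to a vector. -/
def tv {n : ℕ} (C : Fin n → Fin n → Fin n → Fin n → ℝ) :
    Fin n × Fin n × Fin n × Fin n → ℝ :=
  fun x => C x.1 x.2.1 x.2.2.1 x.2.2.2

lemma KP_mul {n : ℕ} (Λ M : Matrix (Fin n) (Fin n) ℝ) : KP Λ * KP M = KP (Λ * M) := by
  ext x y
  calc (KP Λ * KP M) x y
      = ∑ z1, ∑ z2, ∑ z3, ∑ z4, (Λ x.1 z1 * M z1 y.1) * (Λ x.2.1 z2 * M z2 y.2.1)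
          * (Λ x.2.2.1 z3 * M z3 y.2.2.1) * (Λ x.2.2.2 z4 * M z4 y.2.2.2) := by
        simp only [Matrix.mul_apply, KP, Fintype.sum_prod_type]
        refine Finset.sum_congr rfl fun z1 _ => ?_
        refine Finset.sum_congr rfl fun z2 _ => ?_
        refine Finset.sum_congr rfl fun z3 _ => ?_
        refine Finset.sum_congr rfl fun z4 _ => ?_
        ring
    _ = KP (Λ * M) x y := by
        rw [sum4_prod]
        simp [KP, Matrix.mul_apply]

lemma KP_one {n : ℕ} : KP (1 : Matrix (Fin n) (Fin n) ℝ) = 1 := by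
  ext x y
  by_cases h1 : x.1 = y.1 <;> by_cases h2 : x.2.1 = y.2.1 <;>
    by_cases h3 : x.2.2.1 = y.2.2.1 <;> by_cases h4 : x.2.2.2 = y.2.2.2 <;>
    simp [KP, Matrix.one_apply, Prod.ext_iff, h1, h2, h3, h4]

lemma KP_transpose {n : ℕ} (Λ : Matrix (Fin n) (Fin n) ℝ) : (KP Λ)ᵀ = KP Λᵀ := by
  ext x y
  simp only [KP, Matrix.transpose_apply]

lemma tv_pull {n : ℕ} (Λ : Matrix (Fin n) (Fin n) ℝ) (C : Fin n → Fin n → Fin n → Fin n → ℝ) :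
    tv (pull Λ C) = (tv C) ᵥ* (KP Λ) := by
  funext x
  simp only [tv, pull, Matrix.vecMul, dotProduct, KP, Fintype.sum_prod_type]
  refine Finset.sum_congr rfl fun z1 _ => ?_
  refine Finset.sum_congr rfl fun z2 _ => ?_
  refine Finset.sum_congr rfl fun z3 _ => ?_
  refine Finset.sum_congr rfl fun z4 _ => ?_
  ring

/-! ### Properties of `eta` and `theta` -/

lemma etaDot {n : ℕ} (a b : Fin n → ℝ) :
    a ⬝ᵥ (eta n) *ᵥ b = ∑ i, (if i.val = 0 then (-1 : ℝ) else 1) * a i * b i := by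
  simp only [dotProduct, eta, Matrix.mulVec_diagonal]
  exact Finset.sum_congr rfl fun i _ => by ring

lemma etaDot_comm {n : ℕ} (a b : Fin n → ℝ) :
    a ⬝ᵥ (eta n) *ᵥ b = b ⬝ᵥ (eta n) *ᵥ a := by
  rw [etaDot, etaDot]
  exact Finset.sum_congr rfl fun i _ => by ring

lemma theta_mul_eta {n : ℕ} (u : Fin n → ℝ) :
    theta u * eta n = eta n + (2 : ℝ) • vecMulVec u u := by
  ext i j
  simp only [theta, eta, Matrix.add_mul, Matrix.smul_mul, Matrix.one_mul, Matrix.add_apply,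
    Matrix.smul_apply, Matrix.mul_diagonal, Matrix.vecMulVec_apply, Matrix.mulVec_diagonal,
    Matrix.diagonal_apply, Matrix.one_apply, smul_eq_mul]
  by_cases hj : (j : ℕ) = 0 <;> by_cases hij : i = j <;> simp [hj, hij] <;> ring

lemma vecMulVec_mulVec' {n : ℕ} (u x : Fin n → ℝ) :
    (vecMulVec u u) *ᵥ x = (u ⬝ᵥ x) • u := by
  funext i
  simp only [Matrix.mulVec, Matrix.vecMulVec_apply, dotProduct, Pi.smul_apply,
    smul_eq_mul, Finset.sum_mul]
  exact Finset.sum_congr rfl fun k _ => by ring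

lemma N_quad {n : ℕ} (u x : Fin n → ℝ) :
    x ⬝ᵥ (theta u * eta n) *ᵥ x = x ⬝ᵥ (eta n) *ᵥ x + 2 * (u ⬝ᵥ x) ^ 2 := by
  rw [theta_mul_eta, Matrix.add_mulVec, dotProduct_add, Matrix.smul_mulVec,
    vecMulVec_mulVec', dotProduct_smul, dotProduct_smul]
  rw [dotProduct_comm x u]
  simp only [smul_eq_mul]
  ring

/-- Core positivity: a vector `η`-orthogonal to a unit timelike vector is spacelike. -/
lemma core {n : ℕ} (hn : 0 < n) (u w : Fin n → ℝ)
    (hu : u ⬝ᵥ (eta n) *ᵥ u = -1) (hw : u ⬝ᵥ (eta n) *ᵥ w = 0) :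
    0 ≤ w ⬝ᵥ (eta n) *ᵥ w ∧ (w ⬝ᵥ (eta n) *ᵥ w = 0 → w = 0) := by
  set i0 : Fin n := ⟨0, hn⟩ with hi0
  have hsplit : ∀ a b : Fin n → ℝ, a ⬝ᵥ (eta n) *ᵥ b
      = -(a i0 * b i0) + ∑ i ∈ Finset.univ.erase i0, a i * b i := by
    intro a b
    rw [etaDot, ← Finset.add_sum_erase _ _ (Finset.mem_univ i0)]
    congr 1
    · simp [hi0]
    · refine Finset.sum_congr rfl fun i hi => ?_
      have : (i : ℕ) ≠ 0 := by
        intro h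
        exact (Finset.ne_of_mem_erase hi) (Fin.ext h)
      simp [this]
  have hCS : (∑ i ∈ Finset.univ.erase i0, u i * w i) ^ 2
      ≤ (∑ i ∈ Finset.univ.erase i0, u i * u i) * ∑ i ∈ Finset.univ.erase i0, w i * w i := by
    have := Finset.sum_mul_sq_le_sq_mul_sq (Finset.univ.erase i0) u w
    simpa [pow_two, mul_comm, mul_assoc] using this
  set A := ∑ i ∈ Finset.univ.erase i0, u i * u i with hA
  set B := ∑ i ∈ Finset.univ.erase i0, w i * w i with hB
  set P := ∑ i ∈ Finset.univ.erase i0, u i * w i with hP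
  have hA0 : 0 ≤ A := Finset.sum_nonneg fun i _ => mul_self_nonneg _
  have hB0 : 0 ≤ B := Finset.sum_nonneg fun i _ => mul_self_nonneg _
  have hu' : -(u i0 * u i0) + A = -1 := by rw [← hsplit]; exact hu
  have hw' : -(u i0 * w i0) + P = 0 := by rw [← hsplit]; exact hw
  have hww : w ⬝ᵥ (eta n) *ᵥ w = -(w i0 * w i0) + B := hsplit w w
  have hu0 : u i0 * u i0 = A + 1 := by linarith
  have hP0 : u i0 * w i0 = P := by linarith
  have hPsq : P ^ 2 = (A + 1) * (w i0 * w i0) := by rw [← hP0, ← hu0]; ring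
  have hle : (A + 1) * (w i0 * w i0) ≤ A * B := by rw [← hPsq]; exact hCS
  constructor
  · rw [hww]
    nlinarith [hle, hA0, hB0, mul_self_nonneg (w i0)]
  · intro h0
    rw [hww] at h0
    have hBx : A * B = A * (w i0 * w i0) := by
      rw [show B = w i0 * w i0 by linarith]
    have hx0 : w i0 * w i0 ≤ 0 := by linarith [hle, hBx]
    have hw0 : w i0 = 0 := mul_self_eq_zero.1 (le_antisymm hx0 (mul_self_nonneg _))
    have hB00 : B = 0 := by
      have : B = w i0 * w i0 := by linarith
      rw [this, hw0, mul_zero]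
    have hzero : ∀ i ∈ Finset.univ.erase i0, w i * w i = 0 := by
      intro i hi
      have := (Finset.sum_eq_zero_iff_of_nonneg
        (fun i _ => mul_self_nonneg (w i))).1 hB00 i hi
      exact this
    funext i
    by_cases hii : i = i0
    · rw [hii]; exact hw0
    · have := hzero i (Finset.mem_erase.2 ⟨hii, Finset.mem_univ i⟩)
      exact mul_self_eq_zero.1 this

lemma eta_mul_eta {n : ℕ} : eta n * eta n = 1 := by
  ext i j
  by_cases hij : i = j
  · subst hij
    by_cases hi : (i : ℕ) = 0 <;>
      simp [eta, Matrix.diagonal_mul_diagonal, Matrix.diagonal_apply, Matrix.one_apply, hi]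
  · simp [eta, Matrix.diagonal_mul_diagonal, Matrix.diagonal_apply, Matrix.one_apply, hij]

/-- Positivity of the quadratic form of `θ_u η`. -/
lemma quad_pos {n : ℕ} (hn : 0 < n) (u x : Fin n → ℝ)
    (hu : u ⬝ᵥ (eta n) *ᵥ u = -1) (hx : x ≠ 0) :
    0 < x ⬝ᵥ (eta n) *ᵥ x + 2 * (u ⬝ᵥ x) ^ 2 := by
  set y := (eta n) *ᵥ x with hy
  have hxy : (eta n) *ᵥ y = x := by
    rw [hy, Matrix.mulVec_mulVec, eta_mul_eta, Matrix.one_mulVec]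
  have hyne : y ≠ 0 := by
    intro h
    apply hx
    rw [← hxy, h, Matrix.mulVec_zero]
  have h1 : x ⬝ᵥ (eta n) *ᵥ x = y ⬝ᵥ (eta n) *ᵥ y := by
    conv_rhs => rw [hxy]
    rw [← hy]
    exact dotProduct_comm x y
  have h2 : u ⬝ᵥ x = u ⬝ᵥ (eta n) *ᵥ y := by rw [hxy]
  rw [h1, h2]
  set α := u ⬝ᵥ (eta n) *ᵥ y with hα
  set w := y + α • u with hwdef
  have hηw : (eta n) *ᵥ w = (eta n) *ᵥ y + α • ((eta n) *ᵥ u) := by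
    rw [hwdef, Matrix.mulVec_add, Matrix.mulVec_smul]
  have horth : u ⬝ᵥ (eta n) *ᵥ w = 0 := by
    rw [hηw, dotProduct_add, dotProduct_smul, hu, ← hα]
    simp
  have hww : w ⬝ᵥ (eta n) *ᵥ w = y ⬝ᵥ (eta n) *ᵥ y + α ^ 2 := by
    rw [hwdef, hηw, add_dotProduct, dotProduct_add, dotProduct_add,
      smul_dotProduct, smul_dotProduct, dotProduct_smul,
      dotProduct_smul, hu, ← hα, etaDot_comm y u]
    have : u ⬝ᵥ (eta n) *ᵥ y = α := hα.symm
    rw [this]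
    simp only [smul_eq_mul]
    ring
  have hcore := core hn u w hu horth
  rcases eq_or_lt_of_le hcore.1 with heq | hlt
  · -- w ⬝ η w = 0, so w = 0
    have hw0 : w = 0 := hcore.2 heq.symm
    have hy0 : y = -α • u := by
      have : y + α • u = 0 := by rw [← hwdef, hw0]
      funext i
      have := congrFun this i
      simp only [Pi.add_apply, Pi.smul_apply, Pi.zero_apply, smul_eq_mul, Pi.neg_apply] at this ⊢
      linarith
    have hαne : α ≠ 0 := by
      intro h
      apply hyne
      rw [hy0, h]
      simp
    have : y ⬝ᵥ (eta n) *ᵥ y = -α ^ 2 := by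
      rw [hy0, smul_dotProduct, Matrix.mulVec_smul, dotProduct_smul, hu]
      simp only [smul_eq_mul]
      ring
    rw [this]
    have : 0 < α ^ 2 := by positivity
    linarith
  · have : y ⬝ᵥ (eta n) *ᵥ y + α ^ 2 > 0 := by rw [← hww]; exact hlt
    nlinarith [sq_nonneg α]

/-- `θ_u η` is positive definite. -/
lemma N_posDef {n : ℕ} (hn : 0 < n) (u : Fin n → ℝ)
    (hu : u ⬝ᵥ (eta n) *ᵥ u = -1) : (theta u * eta n).PosDef := by
  rw [Matrix.posDef_iff_dotProduct_mulVec]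
  constructor
  · -- Hermitian
    rw [Matrix.IsHermitian, conjTranspose_eq_transpose_of_trivial, theta_mul_eta]
    ext i j
    simp only [Matrix.transpose_apply, Matrix.add_apply, Matrix.smul_apply,
      Matrix.vecMulVec_apply, smul_eq_mul, eta, Matrix.diagonal_apply]
    by_cases hij : i = j
    · subst hij; simp
    · have hji : j ≠ i := fun h => hij h.symm
      simp [hij, hji, mul_comm]
  · intro x hx
    have : star x = x := by funext i; simp
    rw [this, N_quad]
    exact quad_pos hn u x hu hx

/-- A nonzero rank-4 covariant tensor cannot be purely electric with respect to one
unit timelike direction and purely magnetic with respect to another. -/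
theorem stmt9 {n : ℕ} (hn : 2 ≤ n) (u u' : Fin n → ℝ)
    (hu : u ⬝ᵥ (eta n).mulVec u = -1) (hu' : u' ⬝ᵥ (eta n).mulVec u' = -1)
    (C : Fin n → Fin n → Fin n → Fin n → ℝ)
    (hPE : pull (theta u) C = C)
    (hPM : pull (theta u') C = (fun a b c d => -(C a b c d))) :
    C = fun _ _ _ _ => (0 : ℝ) := by
  have hn0 : 0 < n := by omega
  set c := tv C with hc
  -- The two hypotheses, in vector form
  have h1 : c ᵥ* KP (theta u) = c := by rw [← tv_pull, hPE]
  have h2 : c ᵥ* KP (theta u') = -c := by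
    rw [← tv_pull, hPM]
    funext x
    simp [hc, tv]
  -- The key quantity Q for a unit timelike vector v
  have hQ : ∀ v : Fin n → ℝ, v ⬝ᵥ (eta n) *ᵥ v = -1 →
      (0 ≤ c ⬝ᵥ (c ᵥ* KP (theta v * eta n)) ∧
        (c ⬝ᵥ (c ᵥ* KP (theta v * eta n)) = 0 → c = 0)) := by
    intro v hv
    have hposdef := N_posDef hn0 v hv
    set N := theta v * eta n with hN
    have hps : N.PosSemidef := hposdef.posSemidef
    obtain ⟨B, hBB, hBsymm⟩ : ∃ B : Matrix (Fin n) (Fin n) ℝ, B * B = N ∧ Bᵀ = B := by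
      open scoped MatrixOrder in
      refine ⟨CFC.sqrt N, CFC.sqrt_mul_sqrt_self N hps.nonneg, ?_⟩
      open scoped MatrixOrder in
      have := (CFC.sqrt_nonneg N).posSemidef.1
      rw [Matrix.IsHermitian, conjTranspose_eq_transpose_of_trivial] at this
      exact this
    have hdetB : IsUnit B.det := by
      have hdetN : 0 < N.det := hposdef.det_pos
      have : B.det * B.det = N.det := by rw [← Matrix.det_mul, hBB]
      refine isUnit_iff_ne_zero.2 fun h => ?_
      rw [h, mul_zero] at this
      exact hdetN.ne this
    have hBinv : B * B⁻¹ = 1 := Matrix.mul_nonsing_inv B hdetB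
    -- rewrite the quadratic form as a sum of squares
    set e := c ᵥ* KP B with he
    have key : c ⬝ᵥ (c ᵥ* KP N) = e ⬝ᵥ e := by
      rw [← hBB, ← KP_mul, ← Matrix.vecMul_vecMul, ← he]
      have : e ᵥ* KP B = (KP B) *ᵥ e := by
        rw [← Matrix.vecMul_transpose, KP_transpose, hBsymm]
      rw [this, Matrix.dotProduct_mulVec, ← he]
    constructor
    · rw [key]
      exact Finset.sum_nonneg fun i _ => mul_self_nonneg _
    · intro h0
      rw [key] at h0
      have he0 : e = 0 := dotProduct_self_eq_zero.1 h0
      have : c = e ᵥ* KP B⁻¹ := by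
        rw [he, Matrix.vecMul_vecMul, KP_mul, hBinv, KP_one, Matrix.vecMul_one]
      rw [this, he0, Matrix.zero_vecMul]
  -- Compute Q for u and u'
  have hval : ∀ v : Fin n → ℝ, c ᵥ* KP (theta v * eta n)
      = (c ᵥ* KP (theta v)) ᵥ* KP (eta n) := by
    intro v
    rw [Matrix.vecMul_vecMul, KP_mul]
  have hQu : c ⬝ᵥ (c ᵥ* KP (theta u * eta n)) = c ⬝ᵥ (c ᵥ* KP (eta n)) := by
    rw [hval, h1]
  have hQu' : c ⬝ᵥ (c ᵥ* KP (theta u' * eta n)) = -(c ⬝ᵥ (c ᵥ* KP (eta n))) := by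
    rw [hval, h2, Matrix.neg_vecMul, dotProduct_neg]
  obtain ⟨hpos1, hzero1⟩ := hQ u hu
  obtain ⟨hpos2, _⟩ := hQ u' hu'
  have hS0 : c ⬝ᵥ (c ᵥ* KP (eta n)) = 0 := by
    rw [hQu] at hpos1
    rw [hQu'] at hpos2
    linarith
  have hc0 : c = 0 := hzero1 (by rw [hQu, hS0])
  funext a b c' d
  have := congrFun hc0 (a, b, c', d)
  simpa [hc, tv] using this

end
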